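/- Barycentre identity in case IV: let μ be a probability measure on (0,∞) with positive density, mean S_0 ∈ (b̲,b̄), and b̄ < ρ₋(0) where μ_B([0,ρ₋(0)]) = b̲. Then the measure ν¹ = [(S_0−b̲)/(b̄−b̲) − μ((ρ₋(0),∞))]·δ_{b̲} + μ|_(ρ₋(0),∞) has barycentre b̄, i.e. ∫ u ν¹(du) = b̄·ν¹(ℝ₊). -/

import Mathlib

open MeasureTheory Set

noncomputable def bary (μ : Measure ℝ) (Γ : Set ℝ) : ℝ :=
  (∫ u in Γ, u ∂μ) / (μ Γ).toReal

/-- Barycentre identity in case IV of Theorem 3.2: the measure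
`ν¹ = [(S₀−b̲)/(b̄−b̲) − μ((ρ₋(0),∞))]·δ_{b̲} + μ|_(ρ₋(0),∞)`
has barycentre `b̄`. -/
theorem stmt13 (μ : Measure ℝ) [IsProbabilityMeasure μ]
    (hsupp : μ (Set.Iic 0) = 0)
    (hdens : ∀ a b : ℝ, 0 ≤ a → a < b → 0 < μ (Set.Ioo a b))
    (hint : Integrable id μ)
    (S₀ lb ub r₀ : ℝ) (hmean : ∫ u, u ∂μ = S₀)
    (h0 : 0 < lb) (h1 : lb < S₀) (h2 : S₀ < ub)
    (hr₀ : bary μ (Set.Icc 0 r₀) = lb)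
    (hub : ub < r₀) :
    (∫ u in Set.Ioi r₀, u ∂μ)
      + lb * ((S₀ - lb) / (ub - lb) - (μ (Set.Ioi r₀)).toReal)
      = ub * ((S₀ - lb) / (ub - lb)) := by
  have hr₀pos : (0:ℝ) < r₀ := lt_trans (lt_trans (lt_trans h0 h1) h2) hub
  -- Iic r₀ and Icc 0 r₀ agree a.e.
  have hIio : μ (Set.Iio 0) = 0 :=
    le_antisymm (le_trans (measure_mono Iio_subset_Iic_self) hsupp.le) (zero_le)
  have haeeq : Set.Iic r₀ =ᵐ[μ] Set.Icc 0 r₀ := by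
    rw [Filter.eventuallyEq_set]
    filter_upwards [measure_eq_zero_iff_ae_notMem.mp hIio] with x hx
    simp only [Set.mem_Iic, Set.mem_Icc, Set.mem_Iio, not_lt] at hx ⊢
    exact ⟨fun h => ⟨hx, h⟩, fun h => h.2⟩
  have hmeq : μ (Set.Iic r₀) = μ (Set.Icc 0 r₀) := measure_congr haeeq
  -- positivity of μ (Icc 0 r₀)
  have hpos : 0 < (μ (Set.Icc 0 r₀)).toReal := by
    apply ENNReal.toReal_pos
    · intro h
      have := hdens 0 r₀ le_rfl hr₀pos
      exact absurd (le_antisymm (h ▸ measure_mono Ioo_subset_Icc_self) (zero_le))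
        (ne_of_gt this)
    · exact measure_ne_top μ _
  set m : ℝ := (μ (Set.Icc 0 r₀)).toReal with hm
  -- integral over Icc 0 r₀
  have hIcc : ∫ u in Set.Icc 0 r₀, u ∂μ = lb * m := by
    have := hr₀
    rw [bary, div_eq_iff (ne_of_gt hpos)] at this
    linarith [this]
  have hIic : ∫ u in Set.Iic r₀, u ∂μ = lb * m := by
    rw [setIntegral_congr_set haeeq, hIcc]
  -- split the total integral
  have hsplit : (∫ u in Set.Iic r₀, u ∂μ) + (∫ u in Set.Ioi r₀, u ∂μ) = S₀ := by
    rw [← hmean]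
    rw [← compl_Iic (a := r₀)]; exact integral_add_compl measurableSet_Iic hint
  -- measures add up
  have hmadd : (μ (Set.Ioi r₀)).toReal = 1 - m := by
    have h1 : μ (Set.Iic r₀) + μ (Set.Ioi r₀) = 1 := by
      rw [← measure_union (Iic_disjoint_Ioi le_rfl) measurableSet_Ioi,
        Set.Iic_union_Ioi, measure_univ]
    rw [hmeq] at h1
    have := congrArg ENNReal.toReal h1
    rw [ENNReal.toReal_add (measure_ne_top μ _) (measure_ne_top μ _)] at this
    simp at this
    linarith
  have hIoi : ∫ u in Set.Ioi r₀, u ∂μ = S₀ - lb * m := by linarith [hsplit, hIic]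
  rw [hIoi, hmadd]
  have hne : ub - lb ≠ 0 := ne_of_gt (by linarith)
  field_simp
  ring
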